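/- For r = 4, the rational number s defined by binom(i+1,2)·s + (i+1) = binom(4+i, i) is an integer if and only if i is congruent to 1, 2, 5, or 10 modulo 12. -/
import Mathlib


/-- For `r = 4`, the rational number `s` defined by
`binom(i+1,2) s + (i+1) = binom(4+i,i)` is an integer if and only if
`i ≡ 1, 2, 5, 10 (mod 12)`. -/
theorem stmt_2 (i : ℕ) (hi : 1 ≤ i) :
    (∃ s : ℤ, ((i + 1).choose 2 : ℤ) * s + (i + 1) = ((4 + i).choose i : ℤ)) ↔
      (i % 12 = 1 ∨ i % 12 = 2 ∨ i % 12 = 5 ∨ i % 12 = 10) := by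
  have n : ℤ := (i : ℤ)
  -- 2 * choose (i+1) 2 = (i+1) * i
  have hT : ((i + 1).choose 2 : ℕ) * 2 = (i + 1) * i := by
    have := Nat.descFactorial_eq_factorial_mul_choose (i + 1) 2
    simp [Nat.descFactorial_succ, Nat.factorial] at this
    ring_nf at this ⊢
    omega
  -- 24 * choose (4+i) i = (i+1)(i+2)(i+3)(i+4)
  have hC : ((4 + i).choose i : ℕ) * 24 = (i + 1) * (i + 2) * (i + 3) * (i + 4) := by
    have hs : (4 + i).choose i = (i + 4).choose 4 := by
      have h := Nat.choose_symm (show 4 ≤ i + 4 by omega)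
      simp at h
      rw [Nat.add_comm]
      exact h
    have := Nat.descFactorial_eq_factorial_mul_choose (i + 4) 4
    simp [Nat.descFactorial_succ, Nat.factorial] at this
    rw [hs]
    ring_nf
    ring_nf at this
    omega
  have hTZ : (((i + 1).choose 2 : ℤ)) * 2 = ((i : ℤ) + 1) * i := by exact_mod_cast hT
  have hCZ : (((4 + i).choose i : ℤ)) * 24 = ((i : ℤ) + 1) * ((i : ℤ) + 2) * ((i : ℤ) + 3) * ((i : ℤ) + 4) := by
    exact_mod_cast hC
  have hTne : ((i + 1).choose 2 : ℤ) ≠ 0 := by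
    have : 0 < (i + 1).choose 2 := Nat.choose_pos (by omega)
    exact_mod_cast this.ne'
  have key : (∃ s : ℤ, ((i + 1).choose 2 : ℤ) * s + (i + 1) = ((4 + i).choose i : ℤ)) ↔
      (12 : ℤ) ∣ ((i : ℤ) * i + 9 * i + 26) := by
    constructor
    · rintro ⟨s, hs⟩
      refine ⟨s, ?_⟩
      have h24 : ((i + 1).choose 2 : ℤ) * 2 * (12 * s) =
          ((i + 1).choose 2 : ℤ) * 2 * ((i : ℤ) * i + 9 * i + 26) := by
        rw [hTZ]
        have : ((i + 1).choose 2 : ℤ) * s * 24 = (((4 + i).choose i : ℤ) - (i + 1)) * 24 := by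
          rw [← hs]; ring
        rw [mul_comm] at this
        rw [sub_mul, hCZ] at this
        nlinarith [this]
      have := mul_left_cancel₀ (mul_ne_zero hTne two_ne_zero) h24
      linarith
    · rintro ⟨s, hs⟩
      refine ⟨s, ?_⟩
      have h24 : (((i + 1).choose 2 : ℤ) * s + (i + 1)) * 24 = ((4 + i).choose i : ℤ) * 24 := by
        rw [hCZ]
        nlinarith [hTZ, hs]
      have := mul_right_cancel₀ (by norm_num : (24 : ℤ) ≠ 0) h24
      exact this
  rw [key]
  have hnat : ((12 : ℤ) ∣ ((i : ℤ) * i + 9 * i + 26)) ↔ (12 ∣ i * i + 9 * i + 26) := by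
    constructor
    · intro h
      exact_mod_cast (by exact_mod_cast h : ((12 : ℕ) : ℤ) ∣ ((i * i + 9 * i + 26 : ℕ) : ℤ))
    · intro h
      exact_mod_cast Int.natCast_dvd_natCast.2 h
  rw [hnat]
  set r := i % 12 with hr
  set q := i / 12 with hq
  have hi12 : i = 12 * q + r := (Nat.div_add_mod i 12).symm
  have hsplit : i * i + 9 * i + 26 = 12 * (12 * q * q + 2 * q * r + 9 * q) + (r * r + 9 * r + 26) := by
    rw [hi12]; ring
  rw [hsplit, Nat.dvd_add_right ⟨_, rfl⟩]
  have hrlt : r < 12 := Nat.mod_lt i (by norm_num)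
  interval_cases r <;> decide
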